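/- There exists a two-term disjunction with separable convex (in fact linear) constraints and independent bounds for which the continuous relaxation of the 2-split formulation, projected onto x-space, is a proper subset of the projection of the 1-split (big-M) relaxation. Concretely, for the disjunction [x₁+x₂+x₃+x₄ ≤ 1.5] ∨ [−x₁−2x₂−x₃−2x₄ ≤ −26] with xᵢ ∈ [0,5], the point obtained by setting λ₁ = λ₂ = 1/2 and choosing x so that the partial sums violate one split bound while the aggregated bound holds is feasible for the 1-split relaxation but infeasible for the 2-split relaxation with partition {1,2},{3,4}. -/

import Mathlib

open Finset

/-- The continuous relaxation of a split formulation (projected onto x). -/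
def splitRelax {n m : ℕ} (S : Type*) [Fintype S]
    (X : Set (Fin n → ℝ)) (h : Fin n → Fin m → ℝ → ℝ) (b : Fin m → ℝ)
    (I : S → Finset (Fin n)) (lo hi : Fin m → S → ℝ) : Set (Fin n → ℝ) :=
  {x | x ∈ X ∧ ∃ α : Fin m → S → ℝ, ∃ ν : Fin m → S → Fin m → ℝ,
    ∃ lam : Fin m → ℝ,
      (∀ l, 0 ≤ lam l) ∧ (∑ l, lam l) = 1 ∧
      (∀ l s, α l s = ∑ d, ν l s d) ∧
      (∀ l, (∑ s, ν l s l) ≤ b l * lam l) ∧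
      (∀ l s d, lo l s * lam d ≤ ν l s d ∧ ν l s d ≤ hi l s * lam d) ∧
      (∀ l s, (∑ i ∈ I s, h i l (x i)) ≤ α l s)}

lemma sum_split01 (f : Fin 4 → ℝ) :
    ∑ i ∈ ({0, 1} : Finset (Fin 4)), f i = f 0 + f 1 :=
  Finset.sum_pair (by decide)

lemma sum_split23 (f : Fin 4 → ℝ) :
    ∑ i ∈ ({2, 3} : Finset (Fin 4)), f i = f 2 + f 3 :=
  Finset.sum_pair (by decide)

/-- Corollary 1 (strictness): for the two-term disjunction
[x₁+x₂+x₃+x₄ ≤ 1.5] ∨ [−x₁−2x₂−x₃−2x₄ ≤ −26] over [0,5]⁴, the continuous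
relaxation of the 2-split formulation with partition {1,2},{3,4} (and the
tightest independent bounds) is a proper subset of the 1-split (big-M)
relaxation. -/
theorem two_split_strictly_tighter_example :
    splitRelax (n := 4) (m := 2) (Fin 2)
        (Set.univ.pi fun _ => Set.Icc (0 : ℝ) 5)
        (fun i l t => if l = 0 then t else (![-1, -2, -1, -2] : Fin 4 → ℝ) i * t)
        ![3/2, -26]
        ![{0, 1}, {2, 3}]
        ![![0, 0], ![-15, -15]] ![![10, 10], ![0, 0]]
      ⊂
    splitRelax (n := 4) (m := 2) (Fin 1)
        (Set.univ.pi fun _ => Set.Icc (0 : ℝ) 5)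
        (fun i l t => if l = 0 then t else (![-1, -2, -1, -2] : Fin 4 → ℝ) i * t)
        ![3/2, -26]
        ![Finset.univ]
        ![![0], ![-30]] ![![20], ![0]] := by
  have hsub : splitRelax (n := 4) (m := 2) (Fin 2)
        (Set.univ.pi fun _ => Set.Icc (0 : ℝ) 5)
        (fun i l t => if l = 0 then t else (![-1, -2, -1, -2] : Fin 4 → ℝ) i * t)
        ![3/2, -26]
        ![{0, 1}, {2, 3}]
        ![![0, 0], ![-15, -15]] ![![10, 10], ![0, 0]]
      ⊆
    splitRelax (n := 4) (m := 2) (Fin 1)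
        (Set.univ.pi fun _ => Set.Icc (0 : ℝ) 5)
        (fun i l t => if l = 0 then t else (![-1, -2, -1, -2] : Fin 4 → ℝ) i * t)
        ![3/2, -26]
        ![Finset.univ]
        ![![0], ![-30]] ![![20], ![0]] := by
    rintro x ⟨hX, α, ν, lam, hlam0, hlam1, hαν, hb, hbnd, hcons⟩
    refine ⟨hX, fun l _ => α l 0 + α l 1,
      fun l _ d => ν l 0 d + ν l 1 d, lam, hlam0, hlam1, ?_, ?_, ?_, ?_⟩
    · intro l s
      show α l 0 + α l 1 = _
      rw [hαν l 0, hαν l 1, ← Finset.sum_add_distrib]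
    · intro l
      have := hb l
      simpa [Fin.sum_univ_two] using this
    · intro l s d
      have h0 := hbnd l 0 d
      have h1 := hbnd l 1 d
      fin_cases l <;> fin_cases d <;>
        simp [Fin.isValue, Matrix.cons_val_zero, Matrix.cons_val_one,
          Matrix.head_cons] at h0 h1 ⊢ <;> constructor <;> nlinarith [h0.1, h0.2, h1.1, h1.2]
    · intro l s
      have h0 := hcons l 0
      have h1 := hcons l 1
      simp only [Matrix.cons_val_zero, Matrix.cons_val_one, Matrix.head_cons] at h0 h1
      rw [sum_split01] at h0
      rw [sum_split23] at h1
      have : ∑ i, (fun i l t => if l = 0 then t else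
          (![-1, -2, -1, -2] : Fin 4 → ℝ) i * t) i l (x i)
          ≤ α l 0 + α l 1 := by
        rw [Fin.sum_univ_four]
        linarith
      simpa using this
  rw [Set.ssubset_iff_of_subset hsub]
  refine ⟨![0, 2, 3, 5], ⟨?_, ?_⟩, ?_⟩
  · -- in the box
    intro i _
    fin_cases i <;> simp <;> norm_num
  · -- feasible for 1-split
    refine ⟨![![43/4], ![-13]], ![![![3/4, 10]], ![![0, -13]]], ![1/2, 1/2],
      ?_, ?_, ?_, ?_, ?_, ?_⟩
    · intro l; fin_cases l <;> norm_num
    · simp [Fin.sum_univ_two]; norm_num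
    · intro l s; fin_cases l <;> fin_cases s <;> simp [Fin.sum_univ_two] <;> norm_num
    · intro l; fin_cases l <;> simp [Fin.sum_univ_one] <;> norm_num
    · intro l s d; fin_cases l <;> fin_cases s <;> fin_cases d <;> norm_num
    · intro l s
      fin_cases l <;> fin_cases s <;>
        simp [Fin.sum_univ_four] <;> norm_num
  · -- infeasible for 2-split
    rintro ⟨hX, α, ν, lam, hlam0, hlam1, hαν, hb, hbnd, hcons⟩
    have hl0 := hlam0 0
    have hl1 := hlam0 1
    have hsum : lam 0 + lam 1 = 1 := by simpa [Fin.sum_univ_two] using hlam1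
    -- l = 1 constraints on split s = 0
    have hc10 := hcons 1 0
    simp only [Matrix.cons_val_zero, Matrix.cons_val_one, Matrix.head_cons] at hc10
    rw [sum_split01] at hc10
    norm_num at hc10
    -- hc10 : -4 ≤ α 1 0
    have hα10 := hαν 1 0
    rw [Fin.sum_univ_two] at hα10
    have hb1 := hb 1
    rw [Fin.sum_univ_two] at hb1
    simp only [Matrix.cons_val_zero, Matrix.cons_val_one, Matrix.head_cons] at hb1
    have h100 := hbnd 1 0 0
    have h101 := hbnd 1 0 1
    have h111 := hbnd 1 1 1
    simp only [Matrix.cons_val_zero, Matrix.cons_val_one, Matrix.head_cons] at h100 h101 h111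
    -- l = 0 constraints
    have hc00 := hcons 0 0
    have hc01 := hcons 0 1
    simp only [Matrix.cons_val_zero, Matrix.cons_val_one, Matrix.head_cons] at hc00 hc01
    rw [sum_split01] at hc00
    rw [sum_split23] at hc01
    norm_num [Matrix.cons_val_two, Matrix.cons_val_three] at hc00 hc01
    have hα00 := hαν 0 0
    have hα01 := hαν 0 1
    rw [Fin.sum_univ_two] at hα00 hα01
    have hb0 := hb 0
    rw [Fin.sum_univ_two] at hb0
    simp only [Matrix.cons_val_zero, Matrix.cons_val_one, Matrix.head_cons] at hb0
    have h001 := hbnd 0 0 1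
    have h011 := hbnd 0 1 1
    simp only [Matrix.cons_val_zero, Matrix.cons_val_one, Matrix.head_cons] at h001 h011
    nlinarith [h100.2, h101.2, h111.1, h001.2, h011.2, hb0, hb1, hc00, hc01, hc10,
      hα00, hα01, hα10, hsum, hl0, hl1]
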